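/- Let A, D be Hermitian n×n matrices with spectra in an open interval I, let f : I → ℝ be a convex function, and let α ∈ (0,1). Then for every k = 1, …, n, Σ_{i=1}^k λ_i(f(αA + (1−α)D)) ≤ Σ_{i=1}^k λ_i(α f(A) + (1−α) f(D)). -/

import Mathlib

open scoped ComplexOrder

/-- The eigenvalues of a (Hermitian) matrix arranged in non-increasing order, counted
with multiplicity; junk value `0` for non-Hermitian matrices. -/
noncomputable def eigDesc {n : ℕ} (A : Matrix (Fin n) (Fin n) ℂ) (i : Fin n) : ℝ :=
  if h : A.IsHermitian then (h.eigenvalues ∘ Tuple.sort h.eigenvalues) i.rev else 0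

open Matrix Finset

section AuxAujla

lemma entry_conj_diag {n : ℕ} (P : Matrix (Fin n) (Fin n) ℂ) (g : Fin n → ℝ) (j : Fin n) :
    (star P * Matrix.diagonal (fun i => (g i : ℂ)) * P) j j
      = ((∑ i, g i * Complex.normSq (P i j) : ℝ) : ℂ) := by
  rw [Matrix.mul_apply]
  push_cast
  refine Finset.sum_congr rfl fun i _ => ?_
  rw [Matrix.mul_diagonal]
  simp only [Matrix.star_apply]
  have h : star (P i j) * (g i : ℂ) * P i j = (g i : ℂ) * (star (P i j) * P i j) := by ring
  rw [h, Complex.star_def, ← Complex.normSq_eq_conj_mul_self]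

lemma conj_entry {n : ℕ} (Q W : Matrix (Fin n) (Fin n) ℂ) (g : Fin n → ℝ) (j : Fin n) :
    (star W * (Q * Matrix.diagonal (fun i => (g i : ℂ)) * star Q) * W) j j
      = ((∑ i, g i * Complex.normSq ((star Q * W) i j) : ℝ) : ℂ) := by
  have h : star W * (Q * Matrix.diagonal (fun i => (g i : ℂ)) * star Q) * W
      = star (star Q * W) * Matrix.diagonal (fun i => (g i : ℂ)) * (star Q * W) := by
    rw [StarMul.star_mul, star_star]
    noncomm_ring
  rw [h, entry_conj_diag]

lemma col_sum_one {n : ℕ} (P : Matrix (Fin n) (Fin n) ℂ) (hP : star P * P = 1) (j : Fin n) :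
    ∑ i, Complex.normSq (P i j) = 1 := by
  have h : ((star P * P) j j) = ((∑ i, Complex.normSq (P i j) : ℝ) : ℂ) := by
    rw [Matrix.mul_apply]; push_cast
    refine Finset.sum_congr rfl fun i _ => ?_
    simp only [Matrix.star_apply, Complex.star_def]
    exact (Complex.normSq_eq_conj_mul_self).symm
  rw [hP, Matrix.one_apply_eq] at h
  exact_mod_cast h.symm

lemma row_sum_one {n : ℕ} (P : Matrix (Fin n) (Fin n) ℂ) (hP : P * star P = 1) (i : Fin n) :
    ∑ j, Complex.normSq (P i j) = 1 := by
  have h : ((P * star P) i i) = ((∑ j, Complex.normSq (P i j) : ℝ) : ℂ) := by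
    rw [Matrix.mul_apply]; push_cast
    refine Finset.sum_congr rfl fun j _ => ?_
    simp only [Matrix.star_apply, Complex.star_def]
    exact Complex.mul_conj _
  rw [hP, Matrix.one_apply_eq] at h
  exact_mod_cast h.symm

lemma card_topk {n k : ℕ} (hk : k ≤ n) :
    (filter (fun j : Fin n => n - k ≤ (j : ℕ)) univ).card = k := by
  have : (filter (fun j : Fin n => n - k ≤ (j : ℕ)) univ)
      = Finset.map ⟨fun j : Fin k => (⟨n - k + j, by omega⟩ : Fin n),
          fun a b hab => by simpa [Fin.ext_iff] using (by omega : (a:ℕ) = b → a = b) (by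
            have := congrArg Fin.val hab; simpa using this)⟩ univ := by
    ext i
    simp only [mem_filter, mem_univ, true_and, Finset.mem_map, Function.Embedding.coeFn_mk]
    constructor
    · intro h
      exact ⟨⟨(i : ℕ) - (n - k), by omega⟩, by apply Fin.ext; show n - k + ((i : ℕ) - (n - k)) = (i : ℕ); omega⟩
    · rintro ⟨a, rfl⟩; show n - k ≤ n - k + (a : ℕ); omega
  rw [this, Finset.card_map, Finset.card_univ, Fintype.card_fin]

lemma aux_L2 {n : ℕ} (ν w : Fin n → ℝ) (hν : Monotone ν)
    (hw0 : ∀ i, 0 ≤ w i) (hw1 : ∀ i, w i ≤ 1) (k : ℕ) (hk : k ≤ n)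
    (hsum : ∑ i, w i = k) :
    ∑ i, ν i * w i ≤ ∑ i ∈ filter (fun j : Fin n => n - k ≤ (j : ℕ)) univ, ν i := by
  rcases Nat.eq_zero_or_pos k with hk0 | hk0
  · subst hk0
    have hwz : ∀ i ∈ (univ : Finset (Fin n)), w i = 0 := by
      intro i _
      have := (Finset.sum_eq_zero_iff_of_nonneg (fun i _ => hw0 i)).mp (by simpa using hsum)
      exact this i (mem_univ i)
    have : ∀ i ∈ (univ : Finset (Fin n)), ν i * w i = 0 := fun i hi => by
      rw [hwz i hi, mul_zero]
    rw [Finset.sum_congr rfl this, Finset.sum_const_zero]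
    have he : filter (fun j : Fin n => n - 0 ≤ (j : ℕ)) univ = ∅ := by
      apply Finset.filter_false_of_mem
      intro i _
      have := i.isLt
      omega
    rw [he, Finset.sum_empty]
  · have hn : 0 < n := lt_of_lt_of_le hk0 hk
    set T : Finset (Fin n) := filter (fun j : Fin n => n - k ≤ (j : ℕ)) univ with hT
    set t : ℝ := ν ⟨n - k, by omega⟩ with ht
    have hmemT : ∀ i : Fin n, i ∈ T ↔ n - k ≤ (i : ℕ) := by
      intro i; simp [hT]
    have hge : ∀ i ∈ T, t ≤ ν i := fun i hi => by
      apply hν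
      rw [Fin.le_def]
      show n - k ≤ (i : ℕ)
      exact (hmemT i).mp hi
    have hle : ∀ i ∈ Tᶜ, ν i ≤ t := fun i hi => by
      apply hν
      have h2 : ¬ (n - k ≤ (i:ℕ)) := fun hc => (Finset.mem_compl.mp hi) ((hmemT i).mpr hc)
      rw [Fin.le_def]
      show (i : ℕ) ≤ n - k
      omega
    have hcard : (T.card : ℝ) = k := by
      rw [hT, card_topk hk]
    have split : ∑ i, ν i * w i = ∑ i ∈ T, ν i * w i + ∑ i ∈ Tᶜ, ν i * w i :=
      (Finset.sum_add_sum_compl T _).symm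
    have splitw : ∑ i ∈ T, w i + ∑ i ∈ Tᶜ, w i = (k : ℝ) := by
      rw [Finset.sum_add_sum_compl]; exact hsum
    have h1 : ∑ i ∈ T, ν i * w i ≤ ∑ i ∈ T, (ν i - t * (1 - w i)) := by
      apply Finset.sum_le_sum
      intro i hi
      have h' := hge i hi
      have := hw0 i; have := hw1 i
      nlinarith
    have h2 : ∑ i ∈ Tᶜ, ν i * w i ≤ ∑ i ∈ Tᶜ, t * w i := by
      apply Finset.sum_le_sum
      intro i hi
      exact mul_le_mul_of_nonneg_right (hle i hi) (hw0 i)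
    have e1 : ∑ i ∈ T, (ν i - t * (1 - w i)) =
        ∑ i ∈ T, ν i - t * (T.card : ℝ) + t * ∑ i ∈ T, w i := by
      rw [Finset.sum_sub_distrib]
      rw [Finset.mul_sum]
      simp only [mul_sub, mul_one]
      rw [Finset.sum_sub_distrib, ← Finset.mul_sum]
      ring_nf
      rw [Finset.sum_const, nsmul_eq_mul]
      ring
    have e2 : ∑ i ∈ Tᶜ, t * w i = t * ∑ i ∈ Tᶜ, w i := by rw [Finset.mul_sum]
    calc ∑ i, ν i * w i ≤ (∑ i ∈ T, ν i - t * (T.card : ℝ) + t * ∑ i ∈ T, w i)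
          + t * ∑ i ∈ Tᶜ, w i := by
            rw [split, ← e1, ← e2]; exact add_le_add h1 h2
      _ = ∑ i ∈ T, ν i := by
            have hmul : t * ∑ i ∈ T, w i + t * ∑ i ∈ Tᶜ, w i = t * (k : ℝ) := by
              rw [← mul_add, splitw]
            have hcard' : t * ((T.card : ℝ)) = t * (k : ℝ) := by rw [hcard]
            linarith

lemma aux_L2' {n : ℕ} (g w : Fin n → ℝ) (hw0 : ∀ i, 0 ≤ w i) (hw1 : ∀ i, w i ≤ 1)
    (k : ℕ) (hk : k ≤ n) (hsum : ∑ i, w i = k) :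
    ∑ i, g i * w i
      ≤ ∑ i ∈ filter (fun j : Fin n => n - k ≤ (j : ℕ)) univ, (g ∘ Tuple.sort g) i := by
  have h := aux_L2 (g ∘ Tuple.sort g) (w ∘ Tuple.sort g) (Tuple.monotone_sort g)
    (fun i => hw0 _) (fun i => hw1 _) k hk
    (by rw [show ∑ i, (w ∘ Tuple.sort g) i = ∑ i, w ((Tuple.sort g) i) from rfl,
           Equiv.sum_comp (Tuple.sort g) w]; exact hsum)
  calc ∑ i, g i * w i = ∑ i, (g ∘ Tuple.sort g) i * (w ∘ Tuple.sort g) i := by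
        rw [show ∑ i, (g ∘ Tuple.sort g) i * (w ∘ Tuple.sort g) i
              = ∑ i, (fun i => g i * w i) ((Tuple.sort g) i) from rfl,
            Equiv.sum_comp (Tuple.sort g) (fun i => g i * w i)]
    _ ≤ _ := h

lemma kyFan_gen {n : ℕ} (g : Fin n → ℝ) (Q W : Matrix (Fin n) (Fin n) ℂ)
    (hQ1 : star Q * Q = 1) (hQ2 : Q * star Q = 1)
    (hW1 : star W * W = 1) (hW2 : W * star W = 1)
    (S : Finset (Fin n)) (k : ℕ) (hk : k ≤ n) (hS : S.card = k) :
    ∑ j ∈ S, ((star W * (Q * Matrix.diagonal (fun i => (g i : ℂ)) * star Q) * W) j j).re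
      ≤ ∑ j ∈ filter (fun j : Fin n => n - k ≤ (j : ℕ)) univ, (g ∘ Tuple.sort g) j := by
  set P := star Q * W with hPdef
  have hP1 : star P * P = 1 := by
    have h : star P * P = star W * (Q * star Q) * W := by
      rw [hPdef, StarMul.star_mul, star_star]; noncomm_ring
    rw [h, hQ2, mul_one, hW1]
  have hP2 : P * star P = 1 := by
    have h : P * star P = star Q * (W * star W) * Q := by
      rw [hPdef, StarMul.star_mul, star_star]; noncomm_ring
    rw [h, hW2, mul_one, hQ1]
  have hentry : ∀ j, ((star W * (Q * Matrix.diagonal (fun i => (g i : ℂ)) * star Q) * W) j j).re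
      = ∑ i, g i * Complex.normSq (P i j) := by
    intro j
    rw [conj_entry, Complex.ofReal_re]
  have hswap : ∑ j ∈ S, ∑ i, g i * Complex.normSq (P i j)
      = ∑ i, g i * (∑ j ∈ S, Complex.normSq (P i j)) := by
    rw [Finset.sum_comm]
    exact Finset.sum_congr rfl fun i _ => (Finset.mul_sum _ _ _).symm
  calc ∑ j ∈ S, ((star W * (Q * Matrix.diagonal (fun i => (g i : ℂ)) * star Q) * W) j j).re
      = ∑ i, g i * (∑ j ∈ S, Complex.normSq (P i j)) := by
        rw [← hswap]; exact Finset.sum_congr rfl fun j _ => hentry j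
    _ ≤ _ := by
        apply aux_L2' g (fun i => ∑ j ∈ S, Complex.normSq (P i j))
        · intro i; exact Finset.sum_nonneg fun j _ => Complex.normSq_nonneg _
        · intro i
          calc ∑ j ∈ S, Complex.normSq (P i j) ≤ ∑ j, Complex.normSq (P i j) :=
                Finset.sum_le_sum_of_subset_of_nonneg (Finset.subset_univ S)
                  (fun j _ _ => Complex.normSq_nonneg _)
            _ = 1 := row_sum_one P hP2 i
        · exact hk
        · rw [Finset.sum_comm]
          rw [Finset.sum_congr rfl (fun j (_ : j ∈ S) => col_sum_one P hP1 j)]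
          simp [hS]

lemma eigDesc_sum {n : ℕ} (E : Matrix (Fin n) (Fin n) ℂ) (hE : E.IsHermitian)
    (k : ℕ) (hk : k ≤ n) :
    ∑ i ∈ filter (fun i : Fin n => (i : ℕ) < k) univ, eigDesc E i
      = ∑ j ∈ filter (fun j : Fin n => n - k ≤ (j : ℕ)) univ,
          (hE.eigenvalues ∘ Tuple.sort hE.eigenvalues) j := by
  refine Finset.sum_nbij' (i := fun (i : Fin n) => i.rev) (j := fun (j : Fin n) => j.rev)
    ?_ ?_ ?_ ?_ ?_
  · intro a ha
    simp only [mem_filter, mem_univ, true_and] at ha ⊢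
    rw [Fin.val_rev]
    have := a.isLt
    omega
  · intro a ha
    simp only [mem_filter, mem_univ, true_and] at ha ⊢
    rw [Fin.val_rev]
    have := a.isLt
    omega
  · intro a _; exact Fin.rev_rev a
  · intro a _; exact Fin.rev_rev a
  · intro a _
    rw [eigDesc, dif_pos hE]


lemma prod_unit1 {n : ℕ} (Q W : Matrix (Fin n) (Fin n) ℂ)
    (hQ2 : Q * star Q = 1) (hW1 : star W * W = 1) :
    star (star Q * W) * (star Q * W) = 1 := by
  have h : star (star Q * W) * (star Q * W) = star W * (Q * star Q) * W := by
    rw [StarMul.star_mul, star_star]; noncomm_ring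
  rw [h, hQ2, mul_one, hW1]

lemma prod_unit2 {n : ℕ} (Q W : Matrix (Fin n) (Fin n) ℂ)
    (hQ1 : star Q * Q = 1) (hW2 : W * star W = 1) :
    (star Q * W) * star (star Q * W) = 1 := by
  have h : (star Q * W) * star (star Q * W) = star Q * (W * star W) * Q := by
    rw [StarMul.star_mul, star_star]; noncomm_ring
  rw [h, hW2, mul_one, hQ1]

lemma re_combo {n : ℕ} (α : ℝ) (X Y : Matrix (Fin n) (Fin n) ℂ) (j : Fin n) :
    ((α • X + (1 - α) • Y) j j).re = α * (X j j).re + (1 - α) * (Y j j).re := by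
  simp [Matrix.add_apply, Matrix.smul_apply, Complex.real_smul, Complex.add_re, Complex.mul_re]

end AuxAujla

/-- Aujla–Silva type inequality: for Hermitian matrices `A, D` with spectra in an open
interval `I`, a convex `f : I → ℝ` and `α ∈ (0,1)`, the partial sums satisfy
`Σ_{i≤k} λ_i(f(αA + (1-α)D)) ≤ Σ_{i≤k} λ_i(α f(A) + (1-α) f(D))` for every `k`. -/
theorem eigDesc_sum_cfc_convexCombination_le {n : ℕ} (A D : Matrix (Fin n) (Fin n) ℂ)
    (hA : A.IsHermitian) (hD : D.IsHermitian)
    (I : Set ℝ) (hI_open : IsOpen I) (hI_conn : I.OrdConnected)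
    (hAspec : spectrum ℝ A ⊆ I) (hDspec : spectrum ℝ D ⊆ I)
    (f : ℝ → ℝ) (hf : ConvexOn ℝ I f)
    (α : ℝ) (hα0 : 0 < α) (hα1 : α < 1) :
    ∀ k : ℕ, k ≤ n →
      ∑ i ∈ Finset.filter (fun i : Fin n => (i : ℕ) < k) Finset.univ,
          eigDesc (cfc f (α • A + (1 - α) • D)) i ≤
        ∑ i ∈ Finset.filter (fun i : Fin n => (i : ℕ) < k) Finset.univ,
          eigDesc (α • cfc f A + (1 - α) • cfc f D) i := by
  intro k hk
  have hI_conv : Convex ℝ I := hI_conn.convex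
  have hC : (α • A + (1 - α) • D).IsHermitian := by
    apply Matrix.IsHermitian.add <;>
      simp [Matrix.IsHermitian, Matrix.conjTranspose_smul, hA.eq, hD.eq]
  set C := α • A + (1 - α) • D with hCdef
  have hE : (cfc f C).IsHermitian := cfc_predicate f C
  have hfA : (cfc f A).IsHermitian := cfc_predicate f A
  have hfD : (cfc f D).IsHermitian := cfc_predicate f D
  have hM : (α • cfc f A + (1 - α) • cfc f D).IsHermitian := by
    apply Matrix.IsHermitian.add <;>
      simp [Matrix.IsHermitian, Matrix.conjTranspose_smul, hfA.eq, hfD.eq]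
  set E := cfc f C with hEdef
  set M := α • cfc f A + (1 - α) • cfc f D with hMdef
  -- unitaries
  set V : Matrix (Fin n) (Fin n) ℂ := (hC.eigenvectorUnitary : Matrix (Fin n) (Fin n) ℂ) with hVdef
  have hV1 : star V * V = 1 := Matrix.UnitaryGroup.star_mul_self _
  have hV2 : V * star V = 1 := Matrix.mem_unitaryGroup_iff.mp hC.eigenvectorUnitary.2
  set VE : Matrix (Fin n) (Fin n) ℂ := (hE.eigenvectorUnitary : Matrix (Fin n) (Fin n) ℂ)
  have hVE1 : star VE * VE = 1 := Matrix.UnitaryGroup.star_mul_self _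
  have hVE2 : VE * star VE = 1 := Matrix.mem_unitaryGroup_iff.mp hE.eigenvectorUnitary.2
  set UM : Matrix (Fin n) (Fin n) ℂ := (hM.eigenvectorUnitary : Matrix (Fin n) (Fin n) ℂ)
  have hUM1 : star UM * UM = 1 := Matrix.UnitaryGroup.star_mul_self _
  have hUM2 : UM * star UM = 1 := Matrix.mem_unitaryGroup_iff.mp hM.eigenvectorUnitary.2
  set g : Fin n → ℝ := fun i => f (hC.eigenvalues i) with hgdef
  have hEdecomp : E = V * Matrix.diagonal (fun i => ((g i : ℝ) : ℂ)) * star V := by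
    rw [hEdef, hC.cfc_eq f]
    rfl
  set T : Finset (Fin n) := filter (fun j : Fin n => n - k ≤ (j : ℕ)) univ with hTdef
  -- LHS bound
  set σE := Tuple.sort hE.eigenvalues with hσE
  have hT'card : (T.image σE).card = k := by
    rw [Finset.card_image_of_injective _ σE.injective, hTdef, card_topk hk]
  have hdiagE : star VE * E * VE = Matrix.diagonal (RCLike.ofReal ∘ hE.eigenvalues) :=
    by have := hE.conjStarAlgAut_star_eigenvectorUnitary
       rwa [Unitary.conjStarAlgAut_star_apply] at this
  have hentryE : ∀ j, hE.eigenvalues j = ((star VE * E * VE) j j).re := by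
    intro j
    rw [hdiagE, Matrix.diagonal_apply_eq]
    exact (Complex.ofReal_re _).symm
  have step1 : ∑ i ∈ filter (fun i : Fin n => (i : ℕ) < k) univ, eigDesc E i
      = ∑ j ∈ T.image σE, ((star VE * E * VE) j j).re := by
    rw [eigDesc_sum E hE k hk,
        Finset.sum_image (fun x _ y _ h => σE.injective h)]
    exact Finset.sum_congr rfl fun j _ => hentryE (σE j)
  have step3 : ∑ j ∈ T.image σE, ((star VE * E * VE) j j).re
      ≤ ∑ j ∈ T, (g ∘ Tuple.sort g) j := by
    have := kyFan_gen g V VE hV1 hV2 hVE1 hVE2 (T.image σE) k hk hT'card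
    rw [← hEdecomp] at this
    exact this
  -- rewrite sorted sum as sum over a k-subset
  set S : Finset (Fin n) := T.image (Tuple.sort g) with hSdef
  have hScard : S.card = k := by
    rw [hSdef, Finset.card_image_of_injective _ (Tuple.sort g).injective, hTdef, card_topk hk]
  have step4 : ∑ j ∈ T, (g ∘ Tuple.sort g) j = ∑ j ∈ S, g j := by
    rw [hSdef, Finset.sum_image (fun x _ y _ h => (Tuple.sort g).injective h)]
    rfl
  -- middle pointwise bound
  have hmid : ∀ j, g j ≤ ((star V * M * V) j j).re := by
    intro j
    -- A part
    set UA : Matrix (Fin n) (Fin n) ℂ := (hA.eigenvectorUnitary : Matrix (Fin n) (Fin n) ℂ)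
    have hUA1 : star UA * UA = 1 := Matrix.UnitaryGroup.star_mul_self _
    have hUA2 : UA * star UA = 1 := Matrix.mem_unitaryGroup_iff.mp hA.eigenvectorUnitary.2
    set PA := star UA * V with hPAdef
    have hPA1 : star PA * PA = 1 := prod_unit1 UA V hUA2 hV1
    have hwA0 : ∀ i, (0:ℝ) ≤ Complex.normSq (PA i j) := fun i => Complex.normSq_nonneg _
    have hwAsum : ∑ i, Complex.normSq (PA i j) = 1 := col_sum_one PA hPA1 j
    have hAdecomp : A = UA * Matrix.diagonal (fun i => ((hA.eigenvalues i : ℝ) : ℂ)) * star UA :=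
      hA.spectral_theorem
    have repA : ((star V * A * V) j j).re = ∑ i, hA.eigenvalues i * Complex.normSq (PA i j) := by
      conv_lhs => rw [hAdecomp]
      rw [conj_entry UA V hA.eigenvalues j, Complex.ofReal_re]
    have hfAdecomp : cfc f A
        = UA * Matrix.diagonal (fun i => ((f (hA.eigenvalues i) : ℝ) : ℂ)) * star UA := by
      rw [hA.cfc_eq f]; rfl
    have repfA : ((star V * cfc f A * V) j j).re
        = ∑ i, f (hA.eigenvalues i) * Complex.normSq (PA i j) := by
      rw [hfAdecomp, conj_entry UA V (fun i => f (hA.eigenvalues i)) j, Complex.ofReal_re]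
    have haj_mem : ((star V * A * V) j j).re ∈ I := by
      rw [repA]
      have hmem := hI_conv.sum_mem (t := univ) (fun i (_ : i ∈ univ) => hwA0 i) hwAsum
        (fun i _ => hAspec (hA.eigenvalues_mem_spectrum_real i))
      have heq : ∑ i, hA.eigenvalues i * Complex.normSq (PA i j)
          = ∑ i, Complex.normSq (PA i j) • hA.eigenvalues i :=
        Finset.sum_congr rfl fun i _ => by rw [smul_eq_mul, mul_comm]
      rw [heq]; exact hmem
    have hjensenA : f (((star V * A * V) j j).re) ≤ ((star V * cfc f A * V) j j).re := by
      rw [repfA, repA]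
      have h1 : ∑ i, hA.eigenvalues i * Complex.normSq (PA i j)
          = ∑ i, Complex.normSq (PA i j) • hA.eigenvalues i :=
        Finset.sum_congr rfl fun i _ => by rw [smul_eq_mul, mul_comm]
      rw [h1]
      have h2 := hf.map_sum_le (t := univ) (fun i _ => hwA0 i) hwAsum
        (fun i _ => hAspec (hA.eigenvalues_mem_spectrum_real i))
      refine h2.trans (le_of_eq ?_)
      exact Finset.sum_congr rfl fun i _ => by rw [smul_eq_mul, mul_comm]
    -- D part
    set UD : Matrix (Fin n) (Fin n) ℂ := (hD.eigenvectorUnitary : Matrix (Fin n) (Fin n) ℂ)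
    have hUD1 : star UD * UD = 1 := Matrix.UnitaryGroup.star_mul_self _
    have hUD2 : UD * star UD = 1 := Matrix.mem_unitaryGroup_iff.mp hD.eigenvectorUnitary.2
    set PD := star UD * V with hPDdef
    have hPD1 : star PD * PD = 1 := prod_unit1 UD V hUD2 hV1
    have hwD0 : ∀ i, (0:ℝ) ≤ Complex.normSq (PD i j) := fun i => Complex.normSq_nonneg _
    have hwDsum : ∑ i, Complex.normSq (PD i j) = 1 := col_sum_one PD hPD1 j
    have hDdecomp : D = UD * Matrix.diagonal (fun i => ((hD.eigenvalues i : ℝ) : ℂ)) * star UD :=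
      hD.spectral_theorem
    have repD : ((star V * D * V) j j).re = ∑ i, hD.eigenvalues i * Complex.normSq (PD i j) := by
      conv_lhs => rw [hDdecomp]
      rw [conj_entry UD V hD.eigenvalues j, Complex.ofReal_re]
    have hfDdecomp : cfc f D
        = UD * Matrix.diagonal (fun i => ((f (hD.eigenvalues i) : ℝ) : ℂ)) * star UD := by
      rw [hD.cfc_eq f]; rfl
    have repfD : ((star V * cfc f D * V) j j).re
        = ∑ i, f (hD.eigenvalues i) * Complex.normSq (PD i j) := by
      rw [hfDdecomp, conj_entry UD V (fun i => f (hD.eigenvalues i)) j, Complex.ofReal_re]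
    have hdj_mem : ((star V * D * V) j j).re ∈ I := by
      rw [repD]
      have hmem := hI_conv.sum_mem (t := univ) (fun i (_ : i ∈ univ) => hwD0 i) hwDsum
        (fun i _ => hDspec (hD.eigenvalues_mem_spectrum_real i))
      have heq : ∑ i, hD.eigenvalues i * Complex.normSq (PD i j)
          = ∑ i, Complex.normSq (PD i j) • hD.eigenvalues i :=
        Finset.sum_congr rfl fun i _ => by rw [smul_eq_mul, mul_comm]
      rw [heq]; exact hmem
    have hjensenD : f (((star V * D * V) j j).re) ≤ ((star V * cfc f D * V) j j).re := by
      rw [repfD, repD]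
      have h1 : ∑ i, hD.eigenvalues i * Complex.normSq (PD i j)
          = ∑ i, Complex.normSq (PD i j) • hD.eigenvalues i :=
        Finset.sum_congr rfl fun i _ => by rw [smul_eq_mul, mul_comm]
      rw [h1]
      have h2 := hf.map_sum_le (t := univ) (fun i _ => hwD0 i) hwDsum
        (fun i _ => hDspec (hD.eigenvalues_mem_spectrum_real i))
      refine h2.trans (le_of_eq ?_)
      exact Finset.sum_congr rfl fun i _ => by rw [smul_eq_mul, mul_comm]
    -- eigenvalue of C as convex combination
    have hCsplit : star V * C * V = α • (star V * A * V) + (1 - α) • (star V * D * V) := by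
      rw [hCdef]
      simp only [Matrix.mul_add, Matrix.add_mul, Matrix.mul_smul, Matrix.smul_mul]
    have hdiagC : star V * C * V = Matrix.diagonal (RCLike.ofReal ∘ hC.eigenvalues) :=
      by have := hC.conjStarAlgAut_star_eigenvectorUnitary
         rwa [Unitary.conjStarAlgAut_star_apply] at this
    have hCval : hC.eigenvalues j
        = α * ((star V * A * V) j j).re + (1 - α) * ((star V * D * V) j j).re := by
      have h1 : ((star V * C * V) j j).re = hC.eigenvalues j := by
        rw [hdiagC, Matrix.diagonal_apply_eq]
        exact Complex.ofReal_re _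
      rw [← h1, hCsplit, re_combo]
    -- conclude
    have hconv := hf.2 haj_mem hdj_mem (le_of_lt hα0) (by linarith : (0:ℝ) ≤ 1 - α)
      (by ring : α + (1 - α) = 1)
    have hMentry : ((star V * M * V) j j).re
        = α * ((star V * cfc f A * V) j j).re + (1 - α) * ((star V * cfc f D * V) j j).re := by
      have hsplit : star V * M * V
          = α • (star V * cfc f A * V) + (1 - α) • (star V * cfc f D * V) := by
        rw [hMdef]
        simp only [Matrix.mul_add, Matrix.add_mul, Matrix.mul_smul, Matrix.smul_mul]
      rw [hsplit, re_combo]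
    have hsmul : α • f (((star V * A * V) j j).re) + (1 - α) • f (((star V * D * V) j j).re)
        = α * f (((star V * A * V) j j).re) + (1 - α) * f (((star V * D * V) j j).re) := by
      norm_num
    calc g j = f (hC.eigenvalues j) := rfl
      _ = f (α • ((star V * A * V) j j).re + (1 - α) • ((star V * D * V) j j).re) := by
          rw [hCval]; norm_num
      _ ≤ α • f (((star V * A * V) j j).re) + (1 - α) • f (((star V * D * V) j j).re) := hconv
      _ = α * f (((star V * A * V) j j).re) + (1 - α) * f (((star V * D * V) j j).re) := hsmul
      _ ≤ α * ((star V * cfc f A * V) j j).re + (1 - α) * ((star V * cfc f D * V) j j).re := by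
          have h2 : (0:ℝ) ≤ 1 - α := by linarith
          exact add_le_add (mul_le_mul_of_nonneg_left hjensenA (le_of_lt hα0))
            (mul_le_mul_of_nonneg_left hjensenD h2)
      _ = ((star V * M * V) j j).re := hMentry.symm
  -- Ky Fan on the RHS
  have step5 : ∑ j ∈ S, g j ≤ ∑ j ∈ S, ((star V * M * V) j j).re :=
    Finset.sum_le_sum fun j _ => hmid j
  have hMdecomp : M = UM * Matrix.diagonal (fun i => ((hM.eigenvalues i : ℝ) : ℂ)) * star UM :=
    hM.spectral_theorem
  have step6 : ∑ j ∈ S, ((star V * M * V) j j).re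
      ≤ ∑ j ∈ T, (hM.eigenvalues ∘ Tuple.sort hM.eigenvalues) j := by
    have := kyFan_gen hM.eigenvalues UM V hUM1 hUM2 hV1 hV2 S k hk hScard
    rw [← hMdecomp] at this
    exact this
  have step7 : ∑ j ∈ T, (hM.eigenvalues ∘ Tuple.sort hM.eigenvalues) j
      = ∑ i ∈ filter (fun i : Fin n => (i : ℕ) < k) univ, eigDesc M i :=
    (eigDesc_sum M hM k hk).symm
  calc ∑ i ∈ filter (fun i : Fin n => (i : ℕ) < k) univ, eigDesc E i
      = ∑ j ∈ T.image σE, ((star VE * E * VE) j j).re := step1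
    _ ≤ ∑ j ∈ T, (g ∘ Tuple.sort g) j := step3
    _ = ∑ j ∈ S, g j := step4
    _ ≤ ∑ j ∈ S, ((star V * M * V) j j).re := step5
    _ ≤ ∑ j ∈ T, (hM.eigenvalues ∘ Tuple.sort hM.eigenvalues) j := step6
    _ = ∑ i ∈ filter (fun i : Fin n => (i : ℕ) < k) univ, eigDesc M i := step7
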